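/- arXiv:2308.04998 — 3 statements merged into one kernel-verified Lean document; each statement's English description precedes it below -/
import Mathlib

section
/- For all integers n, m ≥ 0, one has D(P_{n,m}) = (m + 3/2)·P_{n,m+1} + (n + 1)·P_{n+1,m} in A. -/
open MvPolynomial

noncomputable section

/-- The polynomial ring `A = ℂ[x₁, x₂, x₃, …]`, with variables indexed by
the positive integers (`X k` is the variable `x_k`). -/
abbrev A : Type := MvPolynomial ℕ+ ℂ

/-- The elementary Schur polynomials `S_k`, defined by the generating identity
`∑_{k≥0} S_k z^k = exp(∑_{n≥1} (x_n/(2n)) z^n)`; equivalently, `S_0 = 1` and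
`(k+1) S_{k+1} = ∑_{j=0}^{k} (x_{k+1-j}/2) S_j` (obtained by differentiating in `z`). -/
noncomputable def S : ℕ → A
  | 0 => 1
  | (k+1) =>
      ((k : ℂ) + 1)⁻¹ • ∑ j ∈ (Finset.range (k+1)).attach,
        (MvPolynomial.C (2⁻¹ : ℂ) * MvPolynomial.X ((k - j.1).succPNat)) * S j.1
  termination_by k => k
  decreasing_by
    have := j.2; simp only [Finset.mem_range] at this; omega

/-- The generalized binomial coefficient `C(1/2, k) = (1/2)(1/2−1)⋯(1/2−k+1)/k!`. -/
noncomputable def halfChoose (k : ℕ) : ℂ :=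
  (∏ i ∈ Finset.range k, ((2⁻¹ : ℂ) - (i : ℂ))) / (k.factorial : ℂ)

/-- `P_{n,m} = ∑_{k=0}^{n} (−1)^k C(1/2,k) S_{m+k} S_{n−k}`. -/
noncomputable def P (n m : ℕ) : A :=
  ∑ k ∈ Finset.range (n+1), ((-1 : ℂ)^k * halfChoose k) • (S (m+k) * S (n-k))

/-- The extremal vectors `φ_n = P_{n,n}`. -/
noncomputable def phi (n : ℕ) : A := P n n

/-- The translation operator `D(p) = x₁·p + ∑_{n≥1} n·x_{n+1}·∂p/∂x_n`
(the sum is finite on each polynomial: only the variables occurring in `p` contribute,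
since `∂p/∂x_n = 0` for `n ∉ p.vars`). -/
noncomputable def D (p : A) : A :=
  MvPolynomial.X 1 * p +
    ∑ n ∈ p.vars, ((n : ℕ) : ℂ) • (MvPolynomial.X (n + 1) * MvPolynomial.pderiv n p)

end
noncomputable section Aux
open Finset

noncomputable def dA : Derivation ℂ A A :=
  MvPolynomial.mkDerivation ℂ (fun n : ℕ+ => ((n : ℕ) : ℂ) • (MvPolynomial.X (n + 1) : A))

@[simp] lemma dA_X (i : ℕ+) : dA (MvPolynomial.X i) = ((i : ℕ) : ℂ) • (MvPolynomial.X (i + 1) : A) :=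
  mkDerivation_X _ _ _

lemma sum_vars_eq (p : A) (s : Finset ℕ+) (h : p.vars ⊆ s) :
    ∑ n ∈ s, ((n : ℕ) : ℂ) • (MvPolynomial.X (n + 1) * MvPolynomial.pderiv n p) =
    ∑ n ∈ p.vars, ((n : ℕ) : ℂ) • (MvPolynomial.X (n + 1) * MvPolynomial.pderiv n p) := by
  refine (Finset.sum_subset h fun n _ hn => ?_).symm
  rw [pderiv_eq_zero_of_notMem_vars hn, mul_zero, smul_zero]

lemma E_eq_dA (p : A) :
    ∑ n ∈ p.vars, ((n : ℕ) : ℂ) • (MvPolynomial.X (n + 1) * MvPolynomial.pderiv n p) = dA p := by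
  induction p using MvPolynomial.induction_on with
  | C a => simp [vars_C]
  | add p q hp hq =>
      rw [← sum_vars_eq (p + q) (p.vars ∪ q.vars) (vars_add_subset _ _)]
      simp only [map_add, mul_add, smul_add, Finset.sum_add_distrib]
      rw [sum_vars_eq _ _ Finset.subset_union_left, sum_vars_eq _ _ Finset.subset_union_right,
        hp, hq]
  | mul_X p i hp =>
      have hsub : (p * MvPolynomial.X i).vars ⊆ p.vars ∪ {i} := by
        refine (vars_mul _ _).trans ?_
        rw [vars_X]
      rw [← sum_vars_eq _ (p.vars ∪ {i}) hsub]
      have hterm : ∀ n ∈ p.vars ∪ {i},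
          ((n : ℕ) : ℂ) • (MvPolynomial.X (n + 1) * MvPolynomial.pderiv n (p * MvPolynomial.X i)) =
          (((n : ℕ) : ℂ) • (MvPolynomial.X (n + 1) * MvPolynomial.pderiv n p)) * MvPolynomial.X i
          + ((n : ℕ) : ℂ) • (MvPolynomial.X (n + 1) * (p * MvPolynomial.pderiv n (MvPolynomial.X i))) := by
        intro n _
        rw [pderiv_mul, mul_add, smul_add, smul_mul_assoc, mul_assoc]
      rw [Finset.sum_congr rfl hterm, Finset.sum_add_distrib, ← Finset.sum_mul,
        sum_vars_eq _ _ Finset.subset_union_left, hp]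
      have h2 : ∑ n ∈ p.vars ∪ {i},
          ((n : ℕ) : ℂ) • (MvPolynomial.X (n + 1) * (p * MvPolynomial.pderiv n (MvPolynomial.X i)))
          = ((i : ℕ) : ℂ) • (MvPolynomial.X (i + 1) * p) := by
        rw [Finset.sum_eq_single_of_mem i (by simp)]
        · rw [pderiv_X_self, mul_one]
        · intro n _ hn
          rw [pderiv_X_of_ne (Ne.symm hn), mul_zero, mul_zero, smul_zero]
      rw [h2, Derivation.leibniz, dA_X, smul_eq_mul, smul_eq_mul, mul_smul_comm]
      ring_nf

lemma D_eq (p : A) : D p = MvPolynomial.X 1 * p + dA p := by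
  rw [D, E_eq_dA]

end Aux
noncomputable section Aux2

lemma S_zero : S 0 = 1 := by rw [S]

lemma succPNat_zero_eq : Nat.succPNat 0 = 1 := rfl

lemma S_rec (k : ℕ) : ((k : ℂ) + 1) • S (k + 1) =
    ∑ j ∈ Finset.range (k + 1),
      (MvPolynomial.C (2⁻¹ : ℂ) * MvPolynomial.X ((k - j).succPNat)) * S j := by
  rw [S, smul_inv_smul₀ (Nat.cast_add_one_ne_zero k)]
  exact Finset.sum_attach _
    (fun j => (MvPolynomial.C (2⁻¹ : ℂ) * MvPolynomial.X ((k - j).succPNat)) * S j)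

lemma S_one : S 1 = MvPolynomial.C (2⁻¹ : ℂ) * MvPolynomial.X 1 := by
  have h := S_rec 0
  simpa [S_zero, succPNat_zero_eq] using h

end Aux2
noncomputable section Aux3
open Finset MvPolynomial

local notation "c2" => (MvPolynomial.C (2⁻¹ : ℂ) : A)

lemma succPNat_add_one (n : ℕ) : n.succPNat + 1 = (n + 1).succPNat := rfl

lemma dA_CX (v : ℕ+) :
    dA (c2 * MvPolynomial.X v) = c2 * (((v : ℕ) : ℂ) • MvPolynomial.X (v + 1)) := by
  rw [← smul_eq_C_mul, dA.map_smul, dA_X, smul_eq_C_mul]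

lemma dA_S (k : ℕ) : dA (S k) = ((k : ℂ) + 1) • S (k + 1) - (c2 * MvPolynomial.X 1) * S k := by
  induction k using Nat.strong_induction_on with
  | _ k IH =>
  match k, IH with
  | 0, _ =>
      rw [S_zero, S_one]
      simp
  | (k + 1), IH =>
      have hk : ((k : ℂ) + 1) ≠ 0 := Nat.cast_add_one_ne_zero k
      have hterm : ∀ j ∈ Finset.range (k + 1),
          dA ((c2 * MvPolynomial.X ((k - j).succPNat)) * S j)
          = ( ((j : ℂ) + 1) • (c2 * MvPolynomial.X ((k - j).succPNat) * S (j + 1))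
              - (c2 * MvPolynomial.X 1) * ((c2 * MvPolynomial.X ((k - j).succPNat)) * S j) )
            + (((k - j) + 1 : ℕ) : ℂ) • (c2 * MvPolynomial.X (((k - j) + 1).succPNat) * S j) := by
        intro j hj
        have hj' : j < k + 1 := Finset.mem_range.mp hj
        rw [Derivation.leibniz, IH j hj', dA_CX, succPNat_add_one, Nat.succPNat_coe]
        simp only [smul_eq_mul, smul_eq_C_mul]
        push_cast
        ring
      have key : ((k : ℂ) + 1) • dA (S (k + 1)) =
          ((k : ℂ) + 1) • ((((k : ℂ) + 1) + 1) • S (k + 2)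
            - (c2 * MvPolynomial.X 1) * S (k + 1)) := by
        have hA1 : ∑ j ∈ Finset.range (k + 1),
            ((j : ℂ) + 1) • (c2 * MvPolynomial.X ((k - j).succPNat) * S (j + 1))
            = ∑ j ∈ Finset.range (k + 2),
              (j : ℂ) • (c2 * MvPolynomial.X ((k + 1 - j).succPNat) * S j) := by
          rw [Finset.sum_range_succ'
            (f := fun j => (j : ℂ) • (c2 * MvPolynomial.X ((k + 1 - j).succPNat) * S j))]
          simp only [Nat.cast_zero, zero_smul, add_zero, Nat.succ_sub_succ, Nat.cast_add,
            Nat.cast_one]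
        have hA2 : ∑ j ∈ Finset.range (k + 1),
            (((k - j) + 1 : ℕ) : ℂ) • (c2 * MvPolynomial.X (((k - j) + 1).succPNat) * S j)
            = ∑ j ∈ Finset.range (k + 2),
              (((k : ℂ) + 1) - (j : ℂ)) • (c2 * MvPolynomial.X ((k + 1 - j).succPNat) * S j) := by
          rw [Finset.sum_range_succ
            (f := fun j => (((k : ℂ) + 1) - (j : ℂ)) • (c2 * MvPolynomial.X ((k + 1 - j).succPNat) * S j))]
          rw [show ((k : ℂ) + 1) - ((k + 1 : ℕ) : ℂ) = 0 by push_cast; ring, zero_smul, add_zero]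
          refine Finset.sum_congr rfl fun j hj => ?_
          have hjk : j ≤ k := Nat.lt_succ_iff.mp (Finset.mem_range.mp hj)
          have h1 : (k - j) + 1 = k + 1 - j := by omega
          have h2 : ((k + 1 - j : ℕ) : ℂ) = ((k : ℂ) + 1) - (j : ℂ) := by
            rw [Nat.cast_sub (by omega)]; push_cast; ring
          rw [h1, h2]
        calc ((k : ℂ) + 1) • dA (S (k + 1))
            = dA (((k : ℂ) + 1) • S (k + 1)) := (dA.map_smul _ _).symm
          _ = dA (∑ j ∈ Finset.range (k + 1),
                (c2 * MvPolynomial.X ((k - j).succPNat)) * S j) := by rw [S_rec]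
          _ = ∑ j ∈ Finset.range (k + 1),
                dA ((c2 * MvPolynomial.X ((k - j).succPNat)) * S j) := map_sum _ _ _
          _ = (∑ j ∈ Finset.range (k + 1),
                ((j : ℂ) + 1) • (c2 * MvPolynomial.X ((k - j).succPNat) * S (j + 1)))
              - (c2 * MvPolynomial.X 1) * (((k : ℂ) + 1) • S (k + 1))
              + ∑ j ∈ Finset.range (k + 1),
                (((k - j) + 1 : ℕ) : ℂ) • (c2 * MvPolynomial.X (((k - j) + 1).succPNat) * S j) := by
              rw [Finset.sum_congr rfl hterm, Finset.sum_add_distrib, Finset.sum_sub_distrib,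
                ← Finset.mul_sum, ← S_rec]
          _ = ((k : ℂ) + 1) • ((((k + 1 : ℕ) : ℂ) + 1) • S (k + 2))
              - (c2 * MvPolynomial.X 1) * (((k : ℂ) + 1) • S (k + 1)) := by
              rw [hA1, hA2, sub_add_eq_add_sub, ← Finset.sum_add_distrib]
              rw [Finset.sum_congr rfl (fun j _ => by
                rw [← add_smul, show (j : ℂ) + (((k : ℂ) + 1) - (j : ℂ)) = (k : ℂ) + 1 by ring])]
              rw [← Finset.smul_sum, ← S_rec (k + 1)]
          _ = ((k : ℂ) + 1) • ((((k : ℂ) + 1) + 1) • S (k + 2)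
              - (c2 * MvPolynomial.X 1) * S (k + 1)) := by
              rw [smul_sub, mul_smul_comm]
              push_cast
              ring_nf
      have h2 := congrArg (fun p : A => ((k : ℂ) + 1)⁻¹ • p) key
      simp only [smul_smul, inv_mul_cancel₀ hk, one_smul] at h2
      rw [h2]
      push_cast
      ring_nf

end Aux3
noncomputable section Aux4
open Finset MvPolynomial

lemma D_S_mul (a b : ℕ) : D (S a * S b)
    = ((a : ℂ) + 1) • (S (a + 1) * S b) + ((b : ℂ) + 1) • (S a * S (b + 1)) := by
  rw [D_eq, Derivation.leibniz, dA_S a, dA_S b]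
  have h2 : (MvPolynomial.C (2⁻¹ : ℂ) : A) + MvPolynomial.C (2⁻¹ : ℂ) = 1 := by
    rw [← map_add]; norm_num
  simp only [smul_eq_mul, smul_eq_C_mul]
  linear_combination (-(MvPolynomial.X 1 * S a * S b)) * h2

lemma D_sum {ι : Type*} (s : Finset ι) (f : ι → A) :
    D (∑ i ∈ s, f i) = ∑ i ∈ s, D (f i) := by
  simp only [D_eq, map_sum, Finset.mul_sum, Finset.sum_add_distrib]

lemma D_smul (c : ℂ) (p : A) : D (c • p) = c • D p := by
  rw [D_eq, D_eq, dA.map_smul, mul_smul_comm, smul_add]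

noncomputable def ee (k : ℕ) : ℂ := (-1 : ℂ)^k * halfChoose k

lemma halfChoose_succ (k : ℕ) :
    halfChoose (k + 1) = halfChoose k * ((2⁻¹ : ℂ) - k) / ((k : ℂ) + 1) := by
  have hf : ((k.factorial : ℂ)) ≠ 0 := Nat.cast_ne_zero.mpr k.factorial_ne_zero
  have hk : ((k : ℂ) + 1) ≠ 0 := Nat.cast_add_one_ne_zero k
  rw [halfChoose, halfChoose, Finset.prod_range_succ, Nat.factorial_succ]
  rw [Nat.cast_mul, Nat.cast_add, Nat.cast_one]
  rw [div_mul_eq_mul_div, div_div, mul_comm ((k : ℂ) + 1)]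

lemma ee_key (k : ℕ) : ((k : ℂ) + 1) * ee (k + 1) = ee k * ((k : ℂ) - 1/2) := by
  have hk : ((k : ℂ) + 1) ≠ 0 := Nat.cast_add_one_ne_zero k
  rw [ee, ee, halfChoose_succ, pow_succ]
  field_simp
  ring

lemma main_comb (n : ℕ) (V : ℕ → A) (cm : ℂ) :
    ∑ k ∈ Finset.range (n+1), (ee k * (cm + (k : ℂ) + 1)) • V (k+1)
      + ∑ k ∈ Finset.range (n+1), (ee k * ((n : ℂ) - (k : ℂ) + 1)) • V k
    = ∑ k ∈ Finset.range (n+1), ((cm + 3/2) * ee k) • V (k+1)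
      + ∑ k ∈ Finset.range (n+2), (((n : ℂ) + 1) * ee k) • V k := by
  have hL : ∀ k ∈ Finset.range (n+1),
      (ee k * (cm + (k : ℂ) + 1)) • V (k+1)
      = ((cm + 3/2) * ee k) • V (k+1) + (((k : ℂ) + 1) * ee (k+1)) • V (k+1) := by
    intro k _
    rw [← add_smul, ee_key]
    congr 1
    ring
  have hR : ∀ k ∈ Finset.range (n+1),
      (((n : ℂ) + 1) * ee k) • V k
      = (ee k * ((n : ℂ) - (k : ℂ) + 1)) • V k + ((k : ℂ) * ee k) • V k := by
    intro k _
    rw [← add_smul]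
    congr 1
    ring
  have hshift : ∑ k ∈ Finset.range (n+1), ((k : ℂ) * ee k) • V k
      + (((n : ℂ) + 1) * ee (n+1)) • V (n+1)
      = ∑ k ∈ Finset.range (n+1), (((k : ℂ) + 1) * ee (k+1)) • V (k+1) := by
    rw [Finset.sum_range_succ (f := fun k => (((k : ℂ) + 1) * ee (k+1)) • V (k+1))]
    congr 1
    rw [Finset.sum_range_succ' (f := fun k => ((k : ℂ) * ee k) • V k)]
    push_cast
    simp
  rw [Finset.sum_congr rfl hL, Finset.sum_add_distrib]
  rw [Finset.sum_range_succ (f := fun k => (((n : ℂ) + 1) * ee k) • V k),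
    Finset.sum_congr rfl hR, Finset.sum_add_distrib, ← add_assoc, ← hshift]
  abel

end Aux4
/-- `D(P_{n,m}) = (m + 3/2) P_{n,m+1} + (n + 1) P_{n+1,m}` for all `n, m ≥ 0`. -/
theorem D_P_eq (n m : ℕ) :
    D (P n m) = ((m : ℂ) + 3/2) • P n (m+1) + ((n : ℂ) + 1) • P (n+1) m := by
  have key := main_comb n (fun k => S (m+k) * S (n+1-k)) (m : ℂ)
  have hL : D (P n m) = ∑ k ∈ Finset.range (n+1),
        (ee k * ((m : ℂ) + (k : ℂ) + 1)) • (S (m+(k+1)) * S (n+1-(k+1)))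
      + ∑ k ∈ Finset.range (n+1),
        (ee k * ((n : ℂ) - (k : ℂ) + 1)) • (S (m+k) * S (n+1-k)) := by
    rw [P, D_sum, ← Finset.sum_add_distrib]
    refine Finset.sum_congr rfl fun k hk => ?_
    have hkn : k ≤ n := Nat.lt_succ_iff.mp (Finset.mem_range.mp hk)
    rw [D_smul, D_S_mul (m+k) (n-k), smul_add, smul_smul, smul_smul]
    have hi1 : m + k + 1 = m + (k + 1) := by omega
    have hi2 : n - k = n + 1 - (k + 1) := by omega
    have hi3 : n - k + 1 = n + 1 - k := by omega
    have hs1 : ((-1 : ℂ)^k * halfChoose k) * (((m+k : ℕ) : ℂ) + 1)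
        = ee k * ((m : ℂ) + (k : ℂ) + 1) := by
      rw [ee]; push_cast; ring
    have hs2 : ((-1 : ℂ)^k * halfChoose k) * (((n-k : ℕ) : ℂ) + 1)
        = ee k * ((n : ℂ) - (k : ℂ) + 1) := by
      rw [ee, Nat.cast_sub hkn]
    rw [hs1, hs2, hi3, hi1, hi2]
  have hR : ((m : ℂ) + 3/2) • P n (m+1) + ((n : ℂ) + 1) • P (n+1) m
      = ∑ k ∈ Finset.range (n+1),
          (((m : ℂ) + 3/2) * ee k) • (S (m+(k+1)) * S (n+1-(k+1)))
        + ∑ k ∈ Finset.range (n+2),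
          (((n : ℂ) + 1) * ee k) • (S (m+k) * S (n+1-k)) := by
    rw [P, P, Finset.smul_sum, Finset.smul_sum]
    congr 1
    · refine Finset.sum_congr rfl fun k hk => ?_
      rw [smul_smul]
      have hi1 : m + 1 + k = m + (k + 1) := by omega
      have hi2 : n - k = n + 1 - (k + 1) := by omega
      rw [ee, hi1, hi2]
    · refine Finset.sum_congr rfl fun k hk => ?_
      rw [smul_smul, ee]
  rw [hL, hR]
  exact key
end

section
/- For all integers n, m with m ≥ n ≥ 0, the polynomial P_{n,m} is nonzero and is homogeneous of degree n + m with respect to the grading on A in which the variable x_k has degree k. -/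
open MvPolynomial

section Aux

private abbrev wt : ℕ+ → ℕ := fun k : ℕ+ => (k : ℕ)

private lemma S_homog : ∀ k : ℕ, (S k).IsWeightedHomogeneous wt k := by
  intro k
  induction k using Nat.strong_induction_on with
  | _ k ih =>
    match k with
    | 0 => rw [S]; exact isWeightedHomogeneous_one ℂ wt
    | (k+1) =>
      rw [S, ← mem_weightedHomogeneousSubmodule]
      apply Submodule.smul_mem
      apply Submodule.sum_mem
      rintro ⟨j, hj⟩ -
      rw [Finset.mem_range] at hj
      rw [mem_weightedHomogeneousSubmodule]
      have h1 := ((isWeightedHomogeneous_C wt (2⁻¹ : ℂ)).mul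
        (isWeightedHomogeneous_X ℂ wt ((k - j).succPNat))).mul (ih j (by omega))
      have h2 : 0 + wt (k - j).succPNat + j = k + 1 := by
        simp only [wt, Nat.succPNat_coe]; omega
      rwa [h2] at h1

private lemma coeff_zero_S {k : ℕ} (hk : k ≠ 0) : MvPolynomial.coeff 0 (S k) = 0 := by
  apply (S_homog k).coeff_eq_zero
  simp only [map_zero]
  omega

private lemma antidiagonal_nat_one :
    Finset.HasAntidiagonal.antidiagonal (1 : ℕ) = {(0, 1), (1, 0)} := by decide

private lemma coeff_single_mul (p q : A) (v : ℕ+) :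
    MvPolynomial.coeff (Finsupp.single v 1) (p * q) =
      MvPolynomial.coeff 0 p * MvPolynomial.coeff (Finsupp.single v 1) q +
        MvPolynomial.coeff (Finsupp.single v 1) p * MvPolynomial.coeff 0 q := by
  rw [MvPolynomial.coeff_mul, Finsupp.antidiagonal_single, antidiagonal_nat_one]
  rw [Finset.map_insert, Finset.map_singleton, Finset.sum_insert (by simp)]
  simp [Finsupp.single_zero]

private lemma coeff_single_S (k : ℕ) :
    MvPolynomial.coeff (Finsupp.single (k.succPNat) 1) (S (k + 1)) =
      (2 * ((k : ℂ) + 1))⁻¹ := by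
  classical
  rw [S, MvPolynomial.coeff_smul, MvPolynomial.coeff_sum]
  rw [Finset.sum_attach (Finset.range (k+1)) (fun j => MvPolynomial.coeff
      (Finsupp.single (k.succPNat) 1)
      ((MvPolynomial.C (2⁻¹ : ℂ) * MvPolynomial.X ((k - j).succPNat)) * S j))]
  rw [Finset.sum_eq_single_of_mem 0 (Finset.mem_range.mpr (by omega))]
  · rw [coeff_single_mul, MvPolynomial.coeff_C_mul, MvPolynomial.coeff_C_mul,
      MvPolynomial.coeff_zero_X, Nat.sub_zero]
    have : S 0 = 1 := by rw [S]
    rw [this, MvPolynomial.coeff_zero_one, MvPolynomial.coeff_X']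
    rw [if_pos rfl, smul_eq_mul, mul_inv]
    ring
  · intro j hj hj0
    rw [coeff_single_mul, MvPolynomial.coeff_C_mul, MvPolynomial.coeff_zero_X,
      coeff_zero_S hj0]
    ring

private lemma halfChoose_ne_zero (k : ℕ) : halfChoose k ≠ 0 := by
  unfold halfChoose
  apply div_ne_zero
  · apply Finset.prod_ne_zero_iff.mpr
    intro i _
    intro h
    have h2 : ((2 * i : ℕ) : ℂ) = ((1 : ℕ) : ℂ) := by push_cast; linear_combination (-2 : ℂ) * h
    have := Nat.cast_injective (R := ℂ) h2
    omega
  · exact_mod_cast Nat.factorial_ne_zero k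

private lemma P_homog (n m : ℕ) (h : n ≤ m) :
    (P n m).IsWeightedHomogeneous wt (n + m) := by
  rw [P, ← mem_weightedHomogeneousSubmodule]
  apply Submodule.sum_mem
  intro k hk
  rw [Finset.mem_range] at hk
  apply Submodule.smul_mem
  rw [mem_weightedHomogeneousSubmodule]
  have h1 := (S_homog (m + k)).mul (S_homog (n - k))
  have h2 : (m + k) + (n - k) = n + m := by omega
  rwa [h2] at h1

end Aux

/-- For `m ≥ n ≥ 0`, the polynomial `P_{n,m}` is nonzero and homogeneous of degree
`n + m` for the grading in which the variable `x_k` has degree `k`. -/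
theorem P_ne_zero_and_weighted_homogeneous (n m : ℕ) (h : n ≤ m) :
    P n m ≠ 0 ∧
      (P n m).IsWeightedHomogeneous (fun k : ℕ+ => (k : ℕ)) (n + m) := by
  constructor
  · by_cases h0 : n + m = 0
    · have hn : n = 0 := by omega
      have hm : m = 0 := by omega
      subst hn; subst hm
      have : P 0 0 = 1 := by
        rw [P]
        simp [halfChoose, S]
      rw [this]
      exact one_ne_zero
    · obtain ⟨t, ht⟩ : ∃ t, n + m = t + 1 := ⟨n + m - 1, by omega⟩
      have hm1 : 1 ≤ m := by omega
      intro hP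
      have hc : MvPolynomial.coeff (Finsupp.single (t.succPNat) 1) (P n m) =
          (-1 : ℂ) ^ n * halfChoose n * (2 * ((t : ℂ) + 1))⁻¹ := by
        rw [P, MvPolynomial.coeff_sum]
        rw [Finset.sum_eq_single_of_mem n (Finset.mem_range.mpr (by omega))]
        · rw [MvPolynomial.coeff_smul, coeff_single_mul, coeff_zero_S (by omega),
            Nat.sub_self]
          have hS0 : S 0 = 1 := by rw [S]
          have hmn : m + n = t + 1 := by omega
          rw [hS0, MvPolynomial.coeff_zero_one, hmn, coeff_single_S]
          simp [smul_eq_mul]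
        · intro k hk hkn
          rw [Finset.mem_range] at hk
          rw [MvPolynomial.coeff_smul, coeff_single_mul, coeff_zero_S (by omega),
            coeff_zero_S (by omega)]
          simp
      rw [hP, MvPolynomial.coeff_zero] at hc
      have h1 : (-1 : ℂ) ^ n ≠ 0 := by
        apply pow_ne_zero; norm_num
      have h2 : (2 * ((t : ℂ) + 1))⁻¹ ≠ 0 := by
        apply inv_ne_zero
        exact mul_ne_zero (by norm_num) (Nat.cast_add_one_ne_zero t)
      exact (mul_ne_zero (mul_ne_zero h1 (halfChoose_ne_zero n)) h2) hc.symm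
  · exact P_homog n m h
end

section
/- The family {D^a(φ_b) : a ≥ 0, b ≥ 0} is linearly independent over ℂ in A. -/
open MvPolynomial

noncomputable section AuxProof

namespace DPhiAux

/-- the derivation part of `D` as a bona fide derivation -/
def der : Derivation ℂ A A :=
  MvPolynomial.mkDerivation ℂ (fun n : ℕ+ => ((n : ℕ) : ℂ) • MvPolynomial.X (n + 1))

lemma der_X (n : ℕ+) : der (MvPolynomial.X n) = ((n : ℕ) : ℂ) • MvPolynomial.X (n + 1) :=
  MvPolynomial.mkDerivation_X _ _ _

/-- partial sums of the derivation part of `D` -/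
def dersum (s : Finset ℕ+) (p : A) : A :=
  ∑ n ∈ s, ((n : ℕ) : ℂ) • (MvPolynomial.X (n + 1) * MvPolynomial.pderiv n p)

lemma dersum_congr (p : A) {s : Finset ℕ+} (h : p.vars ⊆ s) :
    dersum s p = dersum p.vars p :=
  (Finset.sum_subset h (fun n _ hn => by
    rw [MvPolynomial.pderiv_eq_zero_of_notMem_vars hn, mul_zero, smul_zero])).symm

lemma dersum_add (s : Finset ℕ+) (p q : A) :
    dersum s (p + q) = dersum s p + dersum s q := by
  simp [dersum, map_add, mul_add, smul_add, Finset.sum_add_distrib]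

lemma dersum_eq_der (p : A) : dersum p.vars p = der p := by
  induction p using MvPolynomial.induction_on with
  | C a =>
      rw [MvPolynomial.vars_C]
      show dersum ∅ _ = der (algebraMap ℂ A a)
      simp [dersum, Derivation.map_algebraMap]
  | add p q hp hq =>
      classical
      rw [← dersum_congr (p + q) (MvPolynomial.vars_add_subset p q), dersum_add,
        dersum_congr p Finset.subset_union_left,
        dersum_congr q Finset.subset_union_right, hp, hq, map_add]
  | mul_X p n hp =>
      classical
      have hsub : (p * MvPolynomial.X n).vars ⊆ p.vars ∪ {n} := by
        refine (MvPolynomial.vars_mul _ _).trans ?_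
        rw [MvPolynomial.vars_X]
      rw [← dersum_congr _ hsub]
      have hexp : dersum (p.vars ∪ {n}) (p * MvPolynomial.X n)
          = dersum (p.vars ∪ {n}) p * MvPolynomial.X n
            + ((n : ℕ) : ℂ) • (MvPolynomial.X (n + 1) * p) := by
        have h2 : ∀ m ∈ p.vars ∪ {n},
            ((m : ℕ) : ℂ) • (MvPolynomial.X (m + 1) * MvPolynomial.pderiv m (p * MvPolynomial.X n))
            = ((m : ℕ) : ℂ) • (MvPolynomial.X (m + 1) * MvPolynomial.pderiv m p) * MvPolynomial.X n
              + (if m = n then ((n : ℕ) : ℂ) • (MvPolynomial.X (n + 1) * p) else 0) := by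
          intro m _
          rw [MvPolynomial.pderiv_mul]
          by_cases hmn : m = n
          · subst hmn
            simp [mul_add, smul_add, mul_comm, mul_left_comm, smul_mul_assoc]
          · rw [MvPolynomial.pderiv_X_of_ne (Ne.symm hmn)]
            simp [hmn, smul_mul_assoc, mul_assoc]
        calc dersum (p.vars ∪ {n}) (p * MvPolynomial.X n)
            = ∑ m ∈ p.vars ∪ {n},
              (((m : ℕ) : ℂ) • (MvPolynomial.X (m + 1) * MvPolynomial.pderiv m p) * MvPolynomial.X n
              + (if m = n then ((n : ℕ) : ℂ) • (MvPolynomial.X (n + 1) * p) else 0)) :=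
              Finset.sum_congr rfl h2
          _ = _ := by
              rw [Finset.sum_add_distrib, Finset.sum_ite_eq' (p.vars ∪ {n}) n]
              simp [dersum, Finset.sum_mul]
      rw [hexp, dersum_congr p Finset.subset_union_left, hp]
      rw [Derivation.leibniz, der_X]
      simp only [smul_eq_mul, smul_mul_assoc, mul_smul_comm]
      ring

lemma D_eq (p : A) : D p = MvPolynomial.X 1 * p + der p := by
  rw [D, ← dersum_eq_der]; rfl

end DPhiAux
end AuxProof

noncomputable section Psi
namespace DPhiAux
open Polynomial

def ψ : A →ₐ[ℂ] Polynomial (Polynomial ℂ) :=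
  MvPolynomial.aeval (fun n : ℕ+ => Polynomial.C Polynomial.X * Polynomial.X ^ (n : ℕ))

def cP : ℕ → Polynomial ℂ
  | 0 => 1
  | (k+1) => ((k : ℂ) + 1)⁻¹ •
      ((Polynomial.C (2⁻¹ : ℂ) * Polynomial.X + Polynomial.C (k : ℂ)) * cP k)

lemma cP_rec (k : ℕ) : ((k : ℂ) + 1) • cP (k+1)
    = (Polynomial.C (2⁻¹ : ℂ) * Polynomial.X + Polynomial.C (k : ℂ)) * cP k := by
  rw [cP, smul_smul, mul_inv_cancel₀ (Nat.cast_add_one_ne_zero k), one_smul]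

lemma sumc (k : ℕ) :
    (Polynomial.C (2⁻¹ : ℂ) * Polynomial.X) * ∑ j ∈ Finset.range (k+1), cP j
      = (Polynomial.C (2⁻¹ : ℂ) * Polynomial.X + Polynomial.C (k : ℂ)) * cP k := by
  induction k with
  | zero => simp [cP]
  | succ k ih =>
      rw [Finset.sum_range_succ, mul_add, ih, ← cP_rec k, Polynomial.smul_eq_C_mul]
      push_cast
      ring

lemma psi_X (n : ℕ+) : ψ (MvPolynomial.X n)
    = Polynomial.C Polynomial.X * Polynomial.X ^ (n : ℕ) :=
  MvPolynomial.aeval_X _ n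

lemma psi_C (a : ℂ) : ψ (MvPolynomial.C a) = Polynomial.C (Polynomial.C a) := by
  simp [ψ, Polynomial.algebraMap_apply]

lemma psi_S (k : ℕ) : ψ (S k) = Polynomial.C (cP k) * Polynomial.X ^ k := by
  induction k using Nat.strong_induction_on with
  | _ k ih =>
    match k with
    | 0 => simp [S, cP]
    | (k+1) =>
      rw [S, map_smul, map_sum]
      have hterm : ∀ j ∈ (Finset.range (k+1)).attach,
          ψ ((MvPolynomial.C (2⁻¹:ℂ) * MvPolynomial.X ((k - j.1).succPNat)) * S j.1)
          = Polynomial.C ((Polynomial.C (2⁻¹:ℂ) * Polynomial.X) * cP j.1)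
              * Polynomial.X ^ (k+1) := by
        intro j hj
        have hjk : j.1 ≤ k := by have := j.2; simp only [Finset.mem_range] at this; omega
        rw [map_mul, map_mul, psi_C, psi_X, ih j.1 (by omega)]
        have hcoe : (((k - j.1).succPNat : ℕ+) : ℕ) = (k - j.1) + 1 := rfl
        rw [hcoe]
        rw [show (Polynomial.X ^ (k+1) : Polynomial (Polynomial ℂ))
            = Polynomial.X ^ ((k - j.1) + 1) * Polynomial.X ^ (j.1) from by
          rw [← pow_add]; congr 1; omega]
        simp only [Polynomial.C_mul]
        ring
      rw [Finset.sum_congr rfl hterm, Finset.sum_attach (Finset.range (k+1))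
        (fun j => Polynomial.C ((Polynomial.C (2⁻¹:ℂ) * Polynomial.X) * cP j)
              * Polynomial.X ^ (k+1)), ← Finset.sum_mul, ← map_sum, ← Finset.mul_sum, sumc]
      rw [cP]
      simp only [Algebra.smul_def, Polynomial.algebraMap_apply, Polynomial.algebraMap_eq,
        map_mul, Polynomial.C_mul, RingHom.id_apply, Algebra.algebraMap_self_apply]
      ring

def Eop (v : Polynomial (Polynomial ℂ)) : Polynomial (Polynomial ℂ) :=
  Polynomial.C Polynomial.X * Polynomial.X * v + Polynomial.X ^ 2 * Polynomial.derivative v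

lemma psi_der (p : A) : ψ (der p) = Polynomial.X ^ 2 * Polynomial.derivative (ψ p) := by
  induction p using MvPolynomial.induction_on with
  | C a =>
      rw [show (MvPolynomial.C a : A) = algebraMap ℂ A a from rfl, Derivation.map_algebraMap]
      rw [show algebraMap ℂ A a = MvPolynomial.C a from rfl]
      simp [psi_C]
  | add p q hp hq => simp [map_add, hp, hq, mul_add]
  | mul_X p n hp =>
      rw [Derivation.leibniz, der_X]
      simp only [smul_eq_mul, map_add, map_mul, map_smul, psi_X, hp]
      obtain ⟨m, hm⟩ : ∃ m, (n : ℕ) = m + 1 := ⟨(n : ℕ) - 1, by have := n.pos; omega⟩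
      have hcoe : ((n + 1 : ℕ+) : ℕ) = (n : ℕ) + 1 := rfl
      rw [hcoe, hm, Polynomial.derivative_mul, Polynomial.derivative_mul,
        Polynomial.derivative_C, Polynomial.derivative_X_pow]
      simp only [Algebra.smul_def, Polynomial.algebraMap_apply, Polynomial.algebraMap_eq,
        RingHom.id_apply, Algebra.algebraMap_self_apply, Nat.add_sub_cancel]
      simp only [← Polynomial.C_eq_natCast]
      ring

lemma psi_D (p : A) : ψ (D p) = Eop (ψ p) := by
  rw [D_eq, map_add, map_mul, psi_X, psi_der, Eop, PNat.one_coe, pow_one]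

lemma psi_D_iter (a : ℕ) (p : A) : ψ (D^[a] p) = Eop^[a] (ψ p) := by
  induction a with
  | zero => rfl
  | succ a ih =>
      rw [Function.iterate_succ_apply', Function.iterate_succ_apply', psi_D, ih]

lemma Eop_monomial (f : Polynomial ℂ) (m : ℕ) :
    Eop (Polynomial.C f * Polynomial.X ^ m)
      = Polynomial.C ((Polynomial.X + Polynomial.C ((m : ℕ) : ℂ)) * f)
          * Polynomial.X ^ (m+1) := by
  cases m with
  | zero =>
      simp only [Eop, pow_zero, mul_one, Polynomial.derivative_C, mul_zero, add_zero,
        Nat.cast_zero, Polynomial.C_0, add_zero, pow_one, Polynomial.C_mul]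
      ring
  | succ m =>
      rw [Eop, Polynomial.derivative_mul, Polynomial.derivative_C,
        Polynomial.derivative_X_pow]
      simp only [Nat.add_sub_cancel, zero_mul, zero_add]
      simp only [← Polynomial.C_eq_natCast]
      simp only [Polynomial.C_add, Polynomial.C_mul]
      ring

def gprod (a b : ℕ) : Polynomial ℂ :=
  ∏ i ∈ Finset.range a, (Polynomial.X + Polynomial.C ((2*b+i : ℕ) : ℂ))

def fP (b : ℕ) : Polynomial ℂ :=
  ∑ k ∈ Finset.range (b+1), ((-1:ℂ)^k * halfChoose k) • (cP (b+k) * cP (b-k))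

lemma psi_phi (b : ℕ) : ψ (phi b) = Polynomial.C (fP b) * Polynomial.X ^ (2*b) := by
  rw [phi, P, map_sum, fP]
  rw [show (Polynomial.C (∑ k ∈ Finset.range (b+1),
      ((-1:ℂ)^k * halfChoose k) • (cP (b+k) * cP (b-k)))) = ∑ k ∈ Finset.range (b+1),
      Polynomial.C (((-1:ℂ)^k * halfChoose k) • (cP (b+k) * cP (b-k))) from
      map_sum Polynomial.C _ _,
    Finset.sum_mul]
  refine Finset.sum_congr rfl ?_
  intro k hk
  have hkb : k ≤ b := by simp only [Finset.mem_range] at hk; omega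
  rw [map_smul, map_mul, psi_S, psi_S]
  have hpow : (2*b) = (b+k) + (b-k) := by omega
  rw [hpow, pow_add]
  simp only [Algebra.smul_def, Polynomial.algebraMap_apply, Polynomial.algebraMap_eq,
    RingHom.id_apply, Algebra.algebraMap_self, map_mul, Polynomial.C_mul]
  ring

lemma main_form (a b : ℕ) :
    ψ (D^[a] (phi b))
      = Polynomial.C (gprod a b * fP b) * Polynomial.X ^ (a + 2*b) := by
  induction a with
  | zero => simp [psi_phi, gprod]
  | succ a ih =>
      rw [Function.iterate_succ_apply', psi_D, psi_D_iter, ← psi_D_iter, ih, Eop_monomial]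
      have he : (a + 2*b) + 1 = (a+1) + 2*b := by omega
      rw [he]
      congr 1
      simp only [gprod, Finset.prod_range_succ]
      exact congrArg Polynomial.C (by push_cast; ring)

end DPhiAux
end Psi

noncomputable section Evals
namespace DPhiAux
open Polynomial

def ee (b m : ℕ) : ℂ := Polynomial.eval ((1:ℂ) - 2*(b:ℂ)) (cP m)

def tt (b k : ℕ) : ℂ := ((-1:ℂ)^k * halfChoose k) * (ee b (b+k) * ee b (b-k))

def vC (b : ℕ) : ℂ := ∑ k ∈ Finset.range (b+1), tt b k

lemma eval_fP (b : ℕ) : Polynomial.eval ((1:ℂ) - 2*(b:ℂ)) (fP b) = vC b := by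
  rw [fP, Polynomial.eval_finset_sum, vC]
  refine Finset.sum_congr rfl fun k _ => ?_
  rw [Polynomial.eval_smul, Polynomial.eval_mul, smul_eq_mul, tt, ee, ee]

lemma ee_rec (b m : ℕ) :
    ((m:ℂ)+1) * ee b (m+1) = (2⁻¹ - (b:ℂ) + (m:ℂ)) * ee b m := by
  have hne : ((m:ℂ)+1) ≠ 0 := Nat.cast_add_one_ne_zero m
  rw [ee, ee, cP, Polynomial.eval_smul, smul_eq_mul, Polynomial.eval_mul,
    Polynomial.eval_add, Polynomial.eval_mul, Polynomial.eval_C, Polynomial.eval_C,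
    Polynomial.eval_X]
  field_simp

lemma hC_rec (k : ℕ) :
    ((k:ℂ)+1) * halfChoose (k+1) = (2⁻¹ - (k:ℂ)) * halfChoose k := by
  have hne : ((k:ℂ)+1) ≠ 0 := Nat.cast_add_one_ne_zero k
  have hfac : ((k.factorial : ℕ) : ℂ) ≠ 0 := Nat.cast_ne_zero.mpr k.factorial_ne_zero
  rw [halfChoose, halfChoose, Finset.prod_range_succ, Nat.factorial_succ]
  push_cast
  field_simp

lemma L4 (b : ℕ) : ∀ m : ℕ, ((m:ℂ)+1) * ee (b+1) (m+1) = (2⁻¹ - ((b:ℂ)+1)) * ee b m := by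
  intro m
  induction m with
  | zero =>
      simp only [Nat.cast_zero, zero_add, one_mul]
      rw [ee, ee, cP, cP]
      simp only [Polynomial.eval_smul, smul_eq_mul, Polynomial.eval_mul, Polynomial.eval_add,
        Polynomial.eval_C, Polynomial.eval_X, Polynomial.eval_one, cP]
      push_cast
      norm_num
      ring
  | succ m ih =>
      have hne : ((m:ℂ)+1) ≠ 0 := Nat.cast_add_one_ne_zero m
      apply mul_left_cancel₀ hne
      have h1 := ee_rec (b+1) (m+1)
      have h3 := ee_rec b m
      push_cast at h1 ⊢
      linear_combination ((m:ℂ)+1) * h1 + (2⁻¹ - (b:ℂ) + (m:ℂ)) * ih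
        - (2⁻¹ - ((b:ℂ)+1)) * h3

lemma stepT (b j : ℕ) (hj : j + 1 ≤ b) :
    (2*((j:ℂ)+1)*((b:ℂ)+(j:ℂ)+1)) * tt b (j+1)
      = (-(2*(j:ℂ)-1)) * ((b:ℂ)-(j:ℂ)) * tt b j := by
  have hne1 : ((j:ℂ)+1) ≠ 0 := Nat.cast_add_one_ne_zero j
  have hne2 : (((b+j:ℕ):ℂ)+1) ≠ 0 := Nat.cast_add_one_ne_zero (b+j)
  have hne3 : (((b-(j+1):ℕ):ℂ)+1) ≠ 0 := Nat.cast_add_one_ne_zero (b-(j+1))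
  have hA : halfChoose (j+1) = ((2⁻¹ - (j:ℂ)) * halfChoose j) / ((j:ℂ)+1) := by
    rw [eq_div_iff hne1]; linear_combination hC_rec j
  have hB : ee b ((b+j)+1) = ((2⁻¹ - (b:ℂ) + ((b+j:ℕ):ℂ)) * ee b (b+j)) / (((b+j:ℕ):ℂ)+1) := by
    rw [eq_div_iff hne2]; linear_combination ee_rec b (b+j)
  have hC' : ee b ((b-(j+1))+1)
      = ((2⁻¹ - (b:ℂ) + ((b-(j+1):ℕ):ℂ)) * ee b (b-(j+1))) / (((b-(j+1):ℕ):ℂ)+1) := by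
    rw [eq_div_iff hne3]; linear_combination ee_rec b (b-(j+1))
  have e1 : b + (j+1) = (b+j)+1 := rfl
  have e2 : b - j = (b-(j+1))+1 := by omega
  have c1 : ((b + j : ℕ) : ℂ) = (b:ℂ) + (j:ℂ) := by push_cast; ring
  have c2 : ((b - (j+1) : ℕ) : ℂ) = (b:ℂ) - (j:ℂ) - 1 := by
    have : (b : ℂ) = ((b - (j+1) : ℕ) : ℂ) + ((j:ℂ)+1) := by
      rw [← Nat.cast_add_one, ← Nat.cast_add]; congr 1; omega
    rw [this]; ring
  have hne4 : ((b:ℂ) - (j:ℂ)) ≠ 0 := by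
    have : ((b:ℂ) - (j:ℂ)) = ((b - j : ℕ):ℂ) := by
      rw [Nat.cast_sub (by omega : j ≤ b)]
    rw [this]
    exact Nat.cast_ne_zero.mpr (by omega)
  rw [tt, tt, e1, e2, pow_succ, hA, hB, hC']
  rw [c1] at hne2 ⊢
  rw [c2] at hne3 ⊢
  field_simp [hne4]
  ring

lemma relT (b k : ℕ) (hk : k ≤ b) :
    (((b:ℂ)+1) + (k:ℂ)) * ((((b:ℂ)+1) - (k:ℂ))) * tt (b+1) k
      = (2⁻¹ - ((b:ℂ)+1))^2 * tt b k := by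
  have hne1 : (((b+k:ℕ):ℂ)+1) ≠ 0 := Nat.cast_add_one_ne_zero (b+k)
  have hne2 : (((b-k:ℕ):ℂ)+1) ≠ 0 := Nat.cast_add_one_ne_zero (b-k)
  have hA : ee (b+1) ((b+k)+1) = ((2⁻¹ - ((b:ℂ)+1)) * ee b (b+k)) / (((b+k:ℕ):ℂ)+1) := by
    rw [eq_div_iff hne1]; linear_combination L4 b (b+k)
  have hB : ee (b+1) ((b-k)+1) = ((2⁻¹ - ((b:ℂ)+1)) * ee b (b-k)) / (((b-k:ℕ):ℂ)+1) := by
    rw [eq_div_iff hne2]; linear_combination L4 b (b-k)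
  have e1 : (b+1) + k = (b+k)+1 := by omega
  have e2 : (b+1) - k = (b-k)+1 := by omega
  have c1 : ((b + k : ℕ) : ℂ) = (b:ℂ) + (k:ℂ) := by push_cast; ring
  have c2 : ((b - k : ℕ) : ℂ) = (b:ℂ) - (k:ℂ) := by
    have : (b : ℂ) = ((b - k : ℕ) : ℂ) + (k:ℂ) := by
      rw [← Nat.cast_add]; congr 1; omega
    rw [this]; ring
  rw [tt, tt, e1, e2, hA, hB]
  rw [c1] at hne1 ⊢
  rw [c2] at hne2 ⊢
  field_simp
  ring

end DPhiAux
end Evals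

noncomputable section Recur
namespace DPhiAux
open Polynomial

def NN (β κ : ℂ) : ℂ :=
  2*κ^2 - 4*κ^3 + 4*β*κ - 16*β*κ^3 - 6*β^2 + 4*β^2*κ + 16*β^2*κ^2

lemma two_j_ne (j : ℕ) : (2*(j:ℂ)-1) ≠ 0 := by
  intro h
  have h2 : ((2*j : ℕ) : ℂ) = ((1:ℕ) : ℂ) := by push_cast; linear_combination h
  exact absurd (Nat.cast_inj.mp h2) (by omega)

lemma recT (b : ℕ) :
    (16*((b:ℂ)+1)^2*(2*(b:ℂ)+3)) * vC (b+1)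
      = ((2*(b:ℂ)+1)*(4*(b:ℂ)+3)*(4*(b:ℂ)+5)) * vC b := by
  have hσne : (2⁻¹ - ((b:ℂ)+1)) ≠ 0 := by
    intro h
    have h1 : ((1:ℕ):ℂ) = ((2*b+2:ℕ):ℂ) := by push_cast; linear_combination 2*h
    exact absurd (Nat.cast_inj.mp h1) (by omega)
  set F : ℕ → ℂ := fun k =>
    2⁻¹*(2*((b:ℂ)+1)-1) * NN ((b:ℂ)+1) (k:ℂ) * tt (b+1) k with hF
  suffices hs : (2⁻¹ - ((b:ℂ)+1))^2 *
      ((16*((b:ℂ)+1)^2*(2*((b:ℂ)+1)+1)) * vC (b+1)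
        - ((2*((b:ℂ)+1)-1)*(4*((b:ℂ)+1)-1)*(4*((b:ℂ)+1)+1)) * vC b) = 0 by
    rcases mul_eq_zero.mp hs with h' | h'
    · exact absurd h' (pow_ne_zero 2 hσne)
    · have h2 := sub_eq_zero.mp h'
      linear_combination h2
  have expand : (2⁻¹ - ((b:ℂ)+1))^2 *
      ((16*((b:ℂ)+1)^2*(2*((b:ℂ)+1)+1)) * vC (b+1)
        - ((2*((b:ℂ)+1)-1)*(4*((b:ℂ)+1)-1)*(4*((b:ℂ)+1)+1)) * vC b)
      = ∑ k ∈ Finset.range (b+1+1),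
          ((2⁻¹ - ((b:ℂ)+1))^2 * (16*((b:ℂ)+1)^2*(2*((b:ℂ)+1)+1))
            - ((2*((b:ℂ)+1)-1)*(4*((b:ℂ)+1)-1)*(4*((b:ℂ)+1)+1))
              * ((((b:ℂ)+1)+(k:ℂ))*(((b:ℂ)+1)-(k:ℂ)))) * tt (b+1) k := by
    have e1 : (2⁻¹ - ((b:ℂ)+1))^2 *
        (((2*((b:ℂ)+1)-1)*(4*((b:ℂ)+1)-1)*(4*((b:ℂ)+1)+1)) * vC b)
        = ∑ k ∈ Finset.range (b+1+1),
            ((2*((b:ℂ)+1)-1)*(4*((b:ℂ)+1)-1)*(4*((b:ℂ)+1)+1))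
              * ((((b:ℂ)+1)+(k:ℂ))*(((b:ℂ)+1)-(k:ℂ))) * tt (b+1) k := by
      conv_rhs => rw [Finset.sum_range_succ]
      rw [show ((2*((b:ℂ)+1)-1)*(4*((b:ℂ)+1)-1)*(4*((b:ℂ)+1)+1))
          * ((((b:ℂ)+1)+((b+1:ℕ):ℂ))*(((b:ℂ)+1)-((b+1:ℕ):ℂ))) * tt (b+1) (b+1) = 0 from by
        rw [show ((b:ℂ)+1)-((b+1:ℕ):ℂ) = 0 from by push_cast; ring]; ring]
      rw [add_zero, vC, Finset.mul_sum, Finset.mul_sum]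
      refine Finset.sum_congr rfl fun k hk => ?_
      have hkb : k ≤ b := by simp only [Finset.mem_range] at hk; omega
      linear_combination ((2*((b:ℂ)+1)-1)*(4*((b:ℂ)+1)-1)*(4*((b:ℂ)+1)+1)) * (relT b k hkb).symm
    have e2 : (2⁻¹ - ((b:ℂ)+1))^2 * ((16*((b:ℂ)+1)^2*(2*((b:ℂ)+1)+1)) * vC (b+1))
        = ∑ k ∈ Finset.range (b+1+1),
            (2⁻¹ - ((b:ℂ)+1))^2 * (16*((b:ℂ)+1)^2*(2*((b:ℂ)+1)+1)) * tt (b+1) k := by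
      rw [vC, Finset.mul_sum, Finset.mul_sum]
      exact Finset.sum_congr rfl fun k _ => by ring
    rw [mul_sub, e2, e1, ← Finset.sum_sub_distrib]
    exact Finset.sum_congr rfl fun k _ => by ring
  have perk : ∀ k ∈ Finset.range (b+1+1),
      ((2⁻¹ - ((b:ℂ)+1))^2 * (16*((b:ℂ)+1)^2*(2*((b:ℂ)+1)+1))
        - ((2*((b:ℂ)+1)-1)*(4*((b:ℂ)+1)-1)*(4*((b:ℂ)+1)+1))
          * ((((b:ℂ)+1)+(k:ℂ))*(((b:ℂ)+1)-(k:ℂ)))) * tt (b+1) k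
        = F k - (if k = 0 then 0 else F (k-1)) := by
    intro k hk
    match k with
    | 0 =>
        rw [if_pos rfl, sub_zero]
        simp only [hF, NN]
        push_cast
        ring
    | (j+1) =>
        have hj1 : j + 1 ≤ b + 1 := by simp only [Finset.mem_range] at hk; omega
        have hst := stepT (b+1) j hj1
        push_cast at hst
        have hne5 : (-(2*(j:ℂ)-1)) * (((b:ℂ)+1)-(j:ℂ)) ≠ 0 := by
          apply mul_ne_zero
          · exact neg_ne_zero.mpr (two_j_ne j)
          · have he : (((b:ℂ)+1)-(j:ℂ)) = ((b+1-j : ℕ):ℂ) := by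
              rw [Nat.cast_sub (by omega : j ≤ b + 1)]; push_cast; ring
            rw [he]; exact Nat.cast_ne_zero.mpr (by omega)
        rw [if_neg (Nat.succ_ne_zero j), Nat.add_sub_cancel]
        apply mul_left_cancel₀ hne5
        simp only [hF, NN]
        push_cast
        linear_combination (-(2⁻¹) * (2*((b:ℂ)+1)-1) *
          (2*(j:ℂ)^2 - 4*(j:ℂ)^3 + 4*((b:ℂ)+1)*(j:ℂ) - 16*((b:ℂ)+1)*(j:ℂ)^3
            - 6*((b:ℂ)+1)^2 + 4*((b:ℂ)+1)^2*(j:ℂ) + 16*((b:ℂ)+1)^2*(j:ℂ)^2)) * hst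
  calc (2⁻¹ - ((b:ℂ)+1))^2 *
      ((16*((b:ℂ)+1)^2*(2*((b:ℂ)+1)+1)) * vC (b+1)
        - ((2*((b:ℂ)+1)-1)*(4*((b:ℂ)+1)-1)*(4*((b:ℂ)+1)+1)) * vC b)
      = ∑ k ∈ Finset.range (b+1+1), (F k - (if k = 0 then 0 else F (k-1))) := by
        rw [expand]; exact Finset.sum_congr rfl perk
    _ = F (b+1) := by
        rw [Finset.sum_range_succ']
        simp only [Nat.succ_ne_zero, if_neg, Nat.add_sub_cancel, if_pos, sub_zero, reduceIte]
        rw [Finset.sum_range_sub F]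
        ring
    _ = 0 := by
        simp only [hF]
        rw [show NN ((b:ℂ)+1) ((b+1:ℕ):ℂ) = 0 from by rw [NN]; push_cast; ring]
        ring

lemma vC_zero : vC 0 = 1 := by
  rw [vC]
  simp [tt, ee, cP, halfChoose]

lemma vC_ne (b : ℕ) : vC b ≠ 0 := by
  induction b with
  | zero => rw [vC_zero]; exact one_ne_zero
  | succ b ih =>
      intro h0
      have hr := recT b
      rw [h0, mul_zero] at hr
      have hBne : ((2*(b:ℂ)+1)*(4*(b:ℂ)+3)*(4*(b:ℂ)+5)) ≠ 0 := by
        have c1 : (2*(b:ℂ)+1) = ((2*b+1 : ℕ):ℂ) := by push_cast; ring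
        have c2 : (4*(b:ℂ)+3) = ((4*b+3 : ℕ):ℂ) := by push_cast; ring
        have c3 : (4*(b:ℂ)+5) = ((4*b+5 : ℕ):ℂ) := by push_cast; ring
        rw [c1, c2, c3]
        exact mul_ne_zero (mul_ne_zero (Nat.cast_ne_zero.mpr (by omega))
          (Nat.cast_ne_zero.mpr (by omega))) (Nat.cast_ne_zero.mpr (by omega))
      rcases mul_eq_zero.mp hr.symm with h' | h'
      · exact hBne h'
      · exact ih h'

end DPhiAux
end Recur

noncomputable section Final
namespace DPhiAux
open Polynomial

lemma eval_gprod_diag (a b : ℕ) :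
    Polynomial.eval ((1:ℂ) - 2*(b:ℂ)) (gprod a b) ≠ 0 := by
  rw [gprod, Polynomial.eval_prod]
  apply Finset.prod_ne_zero_iff.mpr
  intro i _
  rw [Polynomial.eval_add, Polynomial.eval_X, Polynomial.eval_C]
  rw [show (1:ℂ) - 2*(b:ℂ) + ((2*b+i : ℕ):ℂ) = ((i+1 : ℕ):ℂ) from by push_cast; ring]
  exact Nat.cast_ne_zero.mpr (by omega)

lemma eval_gprod_zero (a b b' : ℕ) (hb : b < b') (hw : 2*b' ≤ a + 2*b) :
    Polynomial.eval ((1:ℂ) - 2*(b':ℂ)) (gprod a b) = 0 := by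
  rw [gprod, Polynomial.eval_prod]
  refine Finset.prod_eq_zero (Finset.mem_range.mpr (show 2*b' - 2*b - 1 < a by omega)) ?_
  rw [Polynomial.eval_add, Polynomial.eval_X, Polynomial.eval_C]
  rw [show ((2*b + (2*b'-2*b-1) : ℕ):ℂ) = 2*(b':ℂ) - 1 from by
    rw [show (2*b + (2*b'-2*b-1) : ℕ) = 2*b'-1 from by omega,
      Nat.cast_sub (by omega : 1 ≤ 2*b'), Nat.cast_mul]
    push_cast; ring]
  ring

end DPhiAux
end Final


open DPhiAux in
/-- The family `{D^a(φ_b) : a, b ≥ 0}` is linearly independent over `ℂ`. -/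
theorem iterate_D_phi_linearIndependent :
    LinearIndependent ℂ (fun q : ℕ × ℕ => D^[q.1] (phi q.2)) := by
  rw [linearIndependent_iff']
  intro s g hsum q₀ hq₀
  by_contra hg0
  obtain ⟨q', hq'T, hmax⟩ := Finset.exists_max_image
    (s.filter (fun q => g q ≠ 0 ∧ q.1 + 2*q.2 = q₀.1 + 2*q₀.2)) (fun q => q.2)
    ⟨q₀, by simp [hq₀, hg0]⟩
  rw [Finset.mem_filter] at hq'T
  have hq's := hq'T.1
  have hg' := hq'T.2.1
  have hwq' := hq'T.2.2
  have h1 : ∑ q ∈ s, g q • (Polynomial.C (gprod q.1 q.2 * fP q.2)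
      * Polynomial.X ^ (q.1 + 2*q.2)) = 0 := by
    calc ∑ q ∈ s, g q • (Polynomial.C (gprod q.1 q.2 * fP q.2)
          * Polynomial.X ^ (q.1 + 2*q.2))
        = ∑ q ∈ s, ψ (g q • D^[q.1] (phi q.2)) := by
          refine Finset.sum_congr rfl fun q _ => ?_
          rw [map_smul, main_form]
      _ = ψ (∑ q ∈ s, g q • D^[q.1] (phi q.2)) := (map_sum ψ _ _).symm
      _ = 0 := by rw [hsum, map_zero]
  have h2 := congrArg (fun Q : Polynomial (Polynomial ℂ) =>
      Polynomial.eval ((1:ℂ) - 2*(q'.2:ℂ)) (Q.coeff (q₀.1 + 2*q₀.2))) h1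
  simp only [Polynomial.finset_sum_coeff, Polynomial.coeff_smul, Polynomial.coeff_C_mul,
    Polynomial.coeff_X_pow, Polynomial.eval_finset_sum, smul_eq_mul, mul_ite, mul_one,
    mul_zero, Polynomial.eval_smul, Polynomial.eval_mul,
    Polynomial.eval_zero, Polynomial.coeff_zero,
    apply_ite (Polynomial.eval ((1:ℂ) - 2*(q'.2:ℂ)))] at h2
  rw [Finset.sum_eq_single_of_mem q' hq's ?side] at h2
  · split_ifs at h2 with hc
    · have hgne : Polynomial.eval ((1:ℂ) - 2*(q'.2:ℂ)) (gprod q'.1 q'.2) ≠ 0 :=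
        eval_gprod_diag q'.1 q'.2
      have hfne : Polynomial.eval ((1:ℂ) - 2*(q'.2:ℂ)) (fP q'.2) ≠ 0 := by
        rw [eval_fP]; exact vC_ne q'.2
      rcases mul_eq_zero.mp h2 with h' | h'
      · exact hg' h'
      · rcases mul_eq_zero.mp h' with h'' | h''
        · exact hgne h''
        · exact hfne h''
    · exact hc (by omega)
  case side =>
    intro q hqs hqne
    split_ifs with hcond
    · by_cases hgq : g q = 0
      · rw [hgq]; ring
      · have hqT : q ∈ s.filter (fun q => g q ≠ 0 ∧ q.1 + 2*q.2 = q₀.1 + 2*q₀.2) :=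
          Finset.mem_filter.mpr ⟨hqs, hgq, by omega⟩
        have hble : q.2 ≤ q'.2 := hmax q hqT
        have hblt : q.2 < q'.2 := by
          rcases Nat.lt_or_ge q.2 q'.2 with h | h
          · exact h
          · exfalso
            have hbeq : q.2 = q'.2 := le_antisymm hble h
            have haeq : q.1 = q'.1 := by omega
            exact hqne (Prod.ext haeq hbeq)
        rw [eval_gprod_zero q.1 q.2 q'.2 hblt (by omega)]
        ring
    · rfl
end
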